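/- For n ≥ 2, the upper rank of A^+(B_n) satisfies r4(A^+(B_n)) ≥ n!·⌊n²/4⌋ + n + 2; explicitly, given a partition {I, J} of [n] with |I| = ⌈n/2⌉ and |J| = ⌊n/2⌋, the set {(i,i;id) : i ∈ [n]} ∪ {(i,j;σ) : i ∈ I, j ∈ J, σ ∈ S_n} ∪ {ξ_{(1,1)}, ((1,1)→(1,1))} is an independent subset of A^+(B_n) of that cardinality. -/

import Mathlib

def Bn (n : ℕ) : Type := Option (Fin n × Fin n)

def Bn.mul {n : ℕ} : Bn n → Bn n → Bn n
  | some (i, j), some (k, l) => if j = k then some (i, l) else none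
  | _, _ => none

instance (n : ℕ) : Mul (Bn n) := ⟨Bn.mul⟩

instance (n : ℕ) : Semigroup (Bn n) where
  mul_assoc a b c := by
    show Bn.mul (Bn.mul a b) c = Bn.mul a (Bn.mul b c)
    rcases a with _ | ⟨i, j⟩ <;> rcases b with _ | ⟨k, l⟩ <;> rcases c with _ | ⟨p, q⟩ <;>
      try rfl
    · by_cases h1 : j = k
      · rw [show Bn.mul (some (i, j)) (some (k, l)) = some (i, l) from if_pos h1]; rfl
      · rw [show Bn.mul (some (i, j)) (some (k, l)) = none from if_neg h1]; rfl
    · by_cases h2 : l = p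
      · rw [show Bn.mul (some (k, l)) (some (p, q)) = some (k, q) from if_pos h2]
        by_cases h1 : j = k
        · rw [show Bn.mul (some (i, j)) (some (k, l)) = some (i, l) from if_pos h1]
          exact (if_pos h2).trans (if_pos h1).symm
        · rw [show Bn.mul (some (i, j)) (some (k, l)) = none from if_neg h1]
          exact (if_neg h1).symm
      · rw [show Bn.mul (some (k, l)) (some (p, q)) = none from if_neg h2]
        by_cases h1 : j = k
        · rw [show Bn.mul (some (i, j)) (some (k, l)) = some (i, l) from if_pos h1]
          exact if_neg h2
        · rw [show Bn.mul (some (i, j)) (some (k, l)) = none from if_neg h1]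
          rfl


/-- Maps on `Bn n`, composed left-to-right: `x (f * g) = (x f) g`. -/
def MapBn (n : ℕ) : Type := Bn n → Bn n

instance (n : ℕ) : Monoid (MapBn n) where
  mul f g := fun x => g (f x)
  one := fun x => x
  mul_assoc _ _ _ := rfl
  one_mul _ := rfl
  mul_one _ := rfl

/-- The constant map `ξ_c`. -/
def constMap (n : ℕ) (c : Bn n) : MapBn n := fun _ => c

/-- The `n`-support map `(p, q; σ)`, sending `(i, p) ↦ (iσ, q)` and all else to `θ`. -/
def nSuppMap (n : ℕ) (p q : Fin n) (σ : Equiv.Perm (Fin n)) : MapBn n :=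
  fun x =>
    match x with
    | some (i, j) => if j = p then some (σ i, q) else none
    | none => none

instance (n : ℕ) : DecidableEq (Bn n) :=
  inferInstanceAs (DecidableEq (Option (Fin n × Fin n)))

/-- The singleton-support map `((k,l) → (p,q))`. -/
def sglMap (n : ℕ) (k l p q : Fin n) : MapBn n :=
  fun x => @ite _ (x = some (k, l)) (instDecidableEqBn n x (some (k, l))) (some (p, q)) none

/-- The multiplicative semigroup reduct `A⁺(Bₙ)`, as a set of maps on `Bn n`. -/
def APlus (n : ℕ) : Set (MapBn n) :=
  {f | (∃ c, f = constMap n c) ∨ (∃ p q σ, f = nSuppMap n p q σ) ∨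
       (∃ k l p q, f = sglMap n k l p q)}

/-- Independence of a subset of a semigroup. -/
def IndependentIn {S : Type*} [Semigroup S] (U : Set S) : Prop :=
  ∀ a ∈ U, a ∉ Subsemigroup.closure (U \ {a})


section Helpers

variable {n : ℕ}

lemma bn_some_eq (a b c d : Fin n) :
    (some (a, b) : Bn n) = some (c, d) ↔ a = c ∧ b = d := by
  simp [Prod.ext_iff]

lemma bn_some_ne_none (a : Fin n × Fin n) : (some a : Bn n) ≠ none := Option.some_ne_none a

lemma mapbn_mul_apply (f g : MapBn n) (x : Bn n) : (f * g) x = g (f x) := rfl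

lemma const_mul (c : Bn n) (f : MapBn n) : constMap n c * f = constMap n (f c) := rfl

lemma mul_const (f : MapBn n) (c : Bn n) : f * constMap n c = constMap n c := rfl

lemma constMap_apply (c x : Bn n) : constMap n c x = c := rfl

lemma nSuppMap_none (p q : Fin n) (σ : Equiv.Perm (Fin n)) :
    nSuppMap n p q σ none = none := rfl

lemma nSuppMap_some (p q i j : Fin n) (σ : Equiv.Perm (Fin n)) :
    nSuppMap n p q σ (some (i, j)) = if j = p then some (σ i, q) else none := rfl

lemma sglMap_none (k l p q : Fin n) : sglMap n k l p q none = none :=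
  if_neg (fun hc => by cases hc)

lemma sglMap_some (k l p q i j : Fin n) :
    sglMap n k l p q (some (i, j)) = if i = k ∧ j = l then some (p, q) else none :=
  @if_congr _ _ _ (instDecidableEqBn n _ _) _ _ _ _ _ (bn_some_eq i j k l) rfl rfl

lemma nSupp_mul_nSupp (p q p' q' : Fin n) (σ σ' : Equiv.Perm (Fin n)) :
    nSuppMap n p q σ * nSuppMap n p' q' σ' =
      if q = p' then nSuppMap n p q' (σ.trans σ') else constMap n none := by
  funext x
  show nSuppMap n p' q' σ' (nSuppMap n p q σ x) = _
  by_cases h : q = p' <;> rcases x with _ | ⟨i, j⟩ <;>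
    simp only [if_pos, if_neg, h, nSuppMap_none, nSuppMap_some, constMap_apply] <;>
    (try rfl) <;> split_ifs <;>
    simp_all [nSuppMap_none, nSuppMap_some, constMap_apply] <;> rfl

lemma sgl_mul_sgl (k l p q k' l' p' q' : Fin n) :
    sglMap n k l p q * sglMap n k' l' p' q' =
      if p = k' ∧ q = l' then sglMap n k l p' q' else constMap n none := by
  funext x
  show sglMap n k' l' p' q' (sglMap n k l p q x) = _
  by_cases h : p = k' ∧ q = l' <;> rcases x with _ | ⟨i, j⟩ <;>
    simp only [if_pos, if_neg, h, sglMap_none, sglMap_some, constMap_apply] <;>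
    (try rfl) <;> split_ifs <;>
    simp_all [sglMap_none, sglMap_some, constMap_apply] <;> (try rfl) <;>
    split_ifs <;> simp_all <;> rfl

lemma sgl_mul_nSupp (k l p q p₁ q₁ : Fin n) (σ : Equiv.Perm (Fin n)) :
    sglMap n k l p q * nSuppMap n p₁ q₁ σ =
      if q = p₁ then sglMap n k l (σ p) q₁ else constMap n none := by
  funext x
  show nSuppMap n p₁ q₁ σ (sglMap n k l p q x) = _
  by_cases h : q = p₁ <;> rcases x with _ | ⟨i, j⟩ <;>
    simp only [if_pos, if_neg, h, sglMap_none, sglMap_some, nSuppMap_none, nSuppMap_some,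
      constMap_apply] <;>
    (try rfl) <;> split_ifs <;>
    simp_all [sglMap_none, sglMap_some, nSuppMap_none, nSuppMap_some, constMap_apply] <;> rfl

lemma nSupp_mul_sgl (p q k l p' q' : Fin n) (σ : Equiv.Perm (Fin n)) :
    nSuppMap n p q σ * sglMap n k l p' q' =
      if q = l then sglMap n (σ.symm k) p p' q' else constMap n none := by
  funext x
  show sglMap n k l p' q' (nSuppMap n p q σ x) = _
  by_cases h : q = l <;> rcases x with _ | ⟨i, j⟩ <;>
    simp only [if_pos, if_neg, h, sglMap_none, sglMap_some, nSuppMap_none, nSuppMap_some,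
      constMap_apply] <;>
    (try rfl) <;> split_ifs <;>
    simp_all [sglMap_none, sglMap_some, nSuppMap_none, nSuppMap_some, constMap_apply,
      Equiv.eq_symm_apply] <;> rfl

end Helpers

section Distinct

variable {n : ℕ} [NeZero n]

lemma nSupp_ne_const (p q : Fin n) (σ : Equiv.Perm (Fin n)) (c : Bn n) :
    nSuppMap n p q σ ≠ constMap n c := by
  intro h
  have h0 : nSuppMap n p q σ none = c := by rw [h]; rfl
  have h1 : nSuppMap n p q σ (some (0, p)) = c := by rw [h]; rfl
  rw [nSuppMap_none] at h0
  rw [nSuppMap_some, if_pos rfl] at h1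
  exact bn_some_ne_none _ (h1.trans h0.symm)

lemma fin_zero_ne_one (hn : 2 ≤ n) : (0 : Fin n) ≠ 1 := by
  intro h
  have h0 := congrArg Fin.val h
  simp [Fin.val_zero, Fin.val_one'] at h0
  omega

lemma nSupp_ne_sgl (hn : 2 ≤ n) (p q k l p' q' : Fin n) (σ : Equiv.Perm (Fin n)) :
    nSuppMap n p q σ ≠ sglMap n k l p' q' := by
  intro h
  have h0 : nSuppMap n p q σ (some (0, p)) = sglMap n k l p' q' (some (0, p)) := by rw [h]
  have h1 : nSuppMap n p q σ (some (1, p)) = sglMap n k l p' q' (some (1, p)) := by rw [h]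
  rw [nSuppMap_some, if_pos rfl, sglMap_some] at h0 h1
  by_cases c0 : (0 : Fin n) = k ∧ p = l
  · by_cases c1 : (1 : Fin n) = k ∧ p = l
    · exact fin_zero_ne_one hn (c0.1.trans c1.1.symm)
    · rw [if_neg c1] at h1
      exact bn_some_ne_none _ h1
  · rw [if_neg c0] at h0
    exact bn_some_ne_none _ h0

lemma nSupp_inj {p q p' q' : Fin n} {σ σ' : Equiv.Perm (Fin n)}
    (h : nSuppMap n p q σ = nSuppMap n p' q' σ') : p = p' ∧ q = q' ∧ σ = σ' := by
  have hp : p = p' := by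
    by_contra hp
    have h0 : nSuppMap n p q σ (some (0, p)) = nSuppMap n p' q' σ' (some (0, p)) := by rw [h]
    rw [nSuppMap_some, if_pos rfl, nSuppMap_some, if_neg hp] at h0
    exact bn_some_ne_none _ h0
  subst hp
  have key : ∀ i : Fin n, σ i = σ' i ∧ q = q' := by
    intro i
    have h0 : nSuppMap n p q σ (some (i, p)) = nSuppMap n p q' σ' (some (i, p)) := by rw [h]
    rw [nSuppMap_some, if_pos rfl, nSuppMap_some, if_pos rfl] at h0
    exact (bn_some_eq _ _ _ _).1 h0
  exact ⟨rfl, (key 0).2, Equiv.ext fun i => (key i).1⟩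

omit [NeZero n] in
lemma const_ne_sgl (k l p q : Fin n) (a b : Fin n) :
    constMap n (some (a, b)) ≠ sglMap n k l p q := by
  intro h
  have h0 : constMap n (some (a, b)) none = sglMap n k l p q none := by rw [h]
  replace h0 : (some (a, b) : Bn n) = none := h0.trans (sglMap_none k l p q)
  exact bn_some_ne_none _ h0

end Distinct

section Good

variable {n : ℕ}

/-- Invariant predicate: `f` is a constant map, a singleton-support map, or an
`n`-support map whose parameters satisfy `T`. -/
def GoodProd (T : Fin n → Fin n → Equiv.Perm (Fin n) → Prop) (f : MapBn n) : Prop :=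
  (∃ c, f = constMap n c) ∨ (∃ k l p q, f = sglMap n k l p q) ∨
  (∃ p q σ, T p q σ ∧ f = nSuppMap n p q σ)

lemma goodProd_mul {T : Fin n → Fin n → Equiv.Perm (Fin n) → Prop}
    (hT : ∀ p q σ q' σ', T p q σ → T q q' σ' → T p q' (σ.trans σ'))
    {f g : MapBn n} (hf : GoodProd T f) (hg : GoodProd T g) : GoodProd T (f * g) := by
  obtain (⟨c, rfl⟩ | ⟨k, l, p, q, rfl⟩ | ⟨p, q, σ, hTf, rfl⟩) := hf
  · rw [const_mul]; exact Or.inl ⟨_, rfl⟩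
  all_goals obtain (⟨c', rfl⟩ | ⟨k', l', p', q', rfl⟩ | ⟨p', q', σ', hTg, rfl⟩) := hg
  · rw [mul_const]; exact Or.inl ⟨_, rfl⟩
  · rw [sgl_mul_sgl]; split_ifs
    · exact Or.inr (Or.inl ⟨_, _, _, _, rfl⟩)
    · exact Or.inl ⟨_, rfl⟩
  · rw [sgl_mul_nSupp]; split_ifs
    · exact Or.inr (Or.inl ⟨_, _, _, _, rfl⟩)
    · exact Or.inl ⟨_, rfl⟩
  · rw [mul_const]; exact Or.inl ⟨_, rfl⟩
  · rw [nSupp_mul_sgl]; split_ifs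
    · exact Or.inr (Or.inl ⟨_, _, _, _, rfl⟩)
    · exact Or.inl ⟨_, rfl⟩
  · rw [nSupp_mul_nSupp]; split_ifs with h
    · subst h
      exact Or.inr (Or.inr ⟨_, _, _, hT _ _ _ _ _ hTf hTg, rfl⟩)
    · exact Or.inl ⟨_, rfl⟩

/-- Invariant: the image of `θ` is `θ`. -/
lemma theta_mul {f g : MapBn n} (hf : f none = none) (hg : g none = none) :
    (f * g) none = none := by
  exact (congrArg g hf).trans hg

/-- Invariant: `f` is a constant map or an `n`-support map. -/
lemma constOrN_mul {f g : MapBn n}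
    (hf : (∃ c, f = constMap n c) ∨ ∃ p q σ, f = nSuppMap n p q σ)
    (hg : (∃ c, g = constMap n c) ∨ ∃ p q σ, g = nSuppMap n p q σ) :
    (∃ c, f * g = constMap n c) ∨ ∃ p q σ, f * g = nSuppMap n p q σ := by
  obtain (⟨c, rfl⟩ | ⟨p, q, σ, rfl⟩) := hf
  · rw [const_mul]; exact Or.inl ⟨_, rfl⟩
  obtain (⟨c', rfl⟩ | ⟨p', q', σ', rfl⟩) := hg
  · rw [mul_const]; exact Or.inl ⟨_, rfl⟩
  · rw [nSupp_mul_nSupp]; split_ifs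
    · exact Or.inr ⟨_, _, _, rfl⟩
    · exact Or.inl ⟨_, rfl⟩

end Good

section Indep

variable {n : ℕ} [NeZero n]

lemma sgl_ne_const (k l p q : Fin n) (c : Bn n) : sglMap n k l p q ≠ constMap n c := by
  intro h
  have h0 : sglMap n k l p q none = c := by rw [h]; rfl
  have h1 : sglMap n k l p q (some (k, l)) = c := by rw [h]; rfl
  rw [sglMap_none] at h0
  rw [sglMap_some, if_pos ⟨rfl, rfl⟩] at h1
  exact bn_some_ne_none _ (h1.trans h0.symm)

lemma one_trans (σ : Equiv.Perm (Fin n)) : (1 : Equiv.Perm (Fin n)).trans σ = σ :=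
  Equiv.refl_trans σ

lemma trans_one (σ : Equiv.Perm (Fin n)) : σ.trans (1 : Equiv.Perm (Fin n)) = σ :=
  Equiv.trans_refl σ

lemma independent_Y (hn : 2 ≤ n) (I J : Set (Fin n))
    (hIJ : I ∪ J = Set.univ) (hdisj : I ∩ J = ∅) :
    IndependentIn
      ({f | ∃ i : Fin n, f = nSuppMap n i i 1} ∪
        {f | ∃ i ∈ I, ∃ j ∈ J, ∃ σ : Equiv.Perm (Fin n), f = nSuppMap n i j σ} ∪
        {constMap n (some (0, 0)), sglMap n 0 0 0 0} : Set (MapBn n)) := by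
  set Y : Set (MapBn n) :=
    {f | ∃ i : Fin n, f = nSuppMap n i i 1} ∪
      {f | ∃ i ∈ I, ∃ j ∈ J, ∃ σ : Equiv.Perm (Fin n), f = nSuppMap n i j σ} ∪
      {constMap n (some (0, 0)), sglMap n 0 0 0 0} with hY
  have hdisj' : ∀ x : Fin n, x ∈ I → x ∈ J → False := by
    intro x h1 h2
    have : x ∈ I ∩ J := ⟨h1, h2⟩
    rw [hdisj] at this
    exact this
  intro a ha hmem
  rw [hY] at ha
  rcases ha with (⟨i, rfl⟩ | ⟨i, hi, j, hj, σ₀, rfl⟩) | (rfl | rfl)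
  · -- a = nSuppMap n i i 1
    set T : Fin n → Fin n → Equiv.Perm (Fin n) → Prop :=
      fun p q _ => (p = q ∧ p ≠ i) ∨ (p ∈ I ∧ q ∈ J) with hTdef
    have hT : ∀ p q σ q' σ', T p q σ → T q q' σ' → T p q' (σ.trans σ') := by
      rintro p q σ q' σ' (⟨rfl, hpi⟩ | ⟨hpI, hqJ⟩) (⟨rfl, hqi⟩ | ⟨hqI, hq'J⟩)
      · exact Or.inl ⟨rfl, hpi⟩
      · exact Or.inr ⟨hqI, hq'J⟩
      · exact Or.inr ⟨hpI, hqJ⟩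
      · exact absurd hqJ (fun h => hdisj' q hqI h)
    have hGood : GoodProd T (nSuppMap n i i 1) := by
      refine Subsemigroup.closure_induction (p := fun x _ => GoodProd T x) ?_
        (fun x y _ _ hx hy => goodProd_mul hT hx hy) hmem
      rintro x ⟨hxY, hxa⟩
      rcases hxY with (⟨j, rfl⟩ | ⟨i', hi', j', hj', σ', rfl⟩) | (rfl | rfl)
      · refine Or.inr (Or.inr ⟨j, j, 1, Or.inl ⟨rfl, ?_⟩, rfl⟩)
        intro hji
        exact hxa (by rw [Set.mem_singleton_iff, hji])
      · exact Or.inr (Or.inr ⟨i', j', σ', Or.inr ⟨hi', hj'⟩, rfl⟩)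
      · exact Or.inl ⟨_, rfl⟩
      · exact Or.inr (Or.inl ⟨_, _, _, _, rfl⟩)
    rcases hGood with ⟨c, hc⟩ | ⟨k, l, p, q, hc⟩ | ⟨p, q, σ, hTpq, hc⟩
    · exact nSupp_ne_const _ _ _ _ hc
    · exact nSupp_ne_sgl hn _ _ _ _ _ _ _ hc
    · obtain ⟨rfl, rfl, rfl⟩ : i = p ∧ i = q ∧ 1 = σ := nSupp_inj hc
      rcases hTpq with ⟨_, hpi⟩ | ⟨hpI, hqJ⟩
      · exact hpi rfl
      · exact hdisj' i hpI hqJ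
  · -- a = nSuppMap n i j σ₀ with i ∈ I, j ∈ J
    set T : Fin n → Fin n → Equiv.Perm (Fin n) → Prop :=
      fun p q σ => (p = q ∧ σ = 1) ∨
        (p ∈ I ∧ q ∈ J ∧ ¬(p = i ∧ q = j ∧ σ = σ₀)) with hTdef
    have hT : ∀ p q σ q' σ', T p q σ → T q q' σ' → T p q' (σ.trans σ') := by
      rintro p q σ q' σ' (⟨rfl, rfl⟩ | ⟨hpI, hqJ, hne⟩) (⟨rfl, rfl⟩ | ⟨hqI, hq'J, hne'⟩)
      · exact Or.inl ⟨rfl, trans_one 1⟩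
      · rw [one_trans]
        exact Or.inr ⟨hqI, hq'J, hne'⟩
      · rw [trans_one]
        exact Or.inr ⟨hpI, hqJ, hne⟩
      · exact absurd hqJ (fun h => hdisj' q hqI h)
    have hGood : GoodProd T (nSuppMap n i j σ₀) := by
      refine Subsemigroup.closure_induction (p := fun x _ => GoodProd T x) ?_
        (fun x y _ _ hx hy => goodProd_mul hT hx hy) hmem
      rintro x ⟨hxY, hxa⟩
      rcases hxY with (⟨j', rfl⟩ | ⟨i', hi', j', hj', σ', rfl⟩) | (rfl | rfl)
      · exact Or.inr (Or.inr ⟨j', j', 1, Or.inl ⟨rfl, rfl⟩, rfl⟩)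
      · refine Or.inr (Or.inr ⟨i', j', σ', Or.inr ⟨hi', hj', ?_⟩, rfl⟩)
        rintro ⟨rfl, rfl, rfl⟩
        exact hxa rfl
      · exact Or.inl ⟨_, rfl⟩
      · exact Or.inr (Or.inl ⟨_, _, _, _, rfl⟩)
    rcases hGood with ⟨c, hc⟩ | ⟨k, l, p, q, hc⟩ | ⟨p, q, σ, hTpq, hc⟩
    · exact nSupp_ne_const _ _ _ _ hc
    · exact nSupp_ne_sgl hn _ _ _ _ _ _ _ hc
    · obtain ⟨rfl, rfl, rfl⟩ : i = p ∧ j = q ∧ σ₀ = σ := nSupp_inj hc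
      rcases hTpq with ⟨rfl, _⟩ | ⟨_, _, hne⟩
      · exact hdisj' i hi hj
      · exact hne ⟨rfl, rfl, rfl⟩
  · -- a = constMap n (some (0,0))
    have hGood : constMap n (some (0, 0)) none = none := by
      refine Subsemigroup.closure_induction (p := fun x _ => x none = none) ?_
        (fun x y _ _ hx hy => theta_mul hx hy) hmem
      rintro x ⟨hxY, hxa⟩
      rcases hxY with (⟨j, rfl⟩ | ⟨i', _, j', _, σ', rfl⟩) | (rfl | rfl)
      · exact nSuppMap_none _ _ _
      · exact nSuppMap_none _ _ _
      · exact absurd rfl hxa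
      · exact sglMap_none _ _ _ _
    replace hGood : (some (0, 0) : Bn n) = none := hGood
    exact bn_some_ne_none _ hGood
  · -- a = sglMap n 0 0 0 0
    have hGood : (∃ c, sglMap n 0 0 0 0 = constMap n c) ∨
        ∃ p q σ, sglMap n 0 0 0 0 = nSuppMap n p q σ := by
      refine Subsemigroup.closure_induction
        (p := fun x _ => (∃ c, x = constMap n c) ∨ ∃ p q σ, x = nSuppMap n p q σ) ?_
        (fun x y _ _ hx hy => constOrN_mul hx hy) hmem
      rintro x ⟨hxY, hxa⟩
      rcases hxY with (⟨j, rfl⟩ | ⟨i', _, j', _, σ', rfl⟩) | (rfl | rfl)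
      · exact Or.inr ⟨_, _, _, rfl⟩
      · exact Or.inr ⟨_, _, _, rfl⟩
      · exact Or.inl ⟨_, rfl⟩
      · exact absurd rfl hxa
    rcases hGood with ⟨c, hc⟩ | ⟨p, q, σ, hc⟩
    · exact sgl_ne_const _ _ _ _ _ hc
    · exact nSupp_ne_sgl hn _ _ _ _ _ _ _ hc.symm

end Indep

section Card

variable {n : ℕ} [NeZero n]

lemma ncard_prod' {α β : Type*} (s : Set α) (t : Set β) :
    (s ×ˢ t).ncard = s.ncard * t.ncard := by
  rw [← Nat.card_coe_set_eq, ← Nat.card_coe_set_eq, ← Nat.card_coe_set_eq,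
    Nat.card_congr (Equiv.Set.prod s t), Nat.card_prod]

lemma half_mul_half (n : ℕ) : (n + 1) / 2 * (n / 2) = n ^ 2 / 4 := by
  rcases Nat.even_or_odd n with ⟨m, rfl⟩ | ⟨m, rfl⟩
  · have h1 : (m + m) ^ 2 = 4 * m ^ 2 := by ring
    have h2 : (m + m + 1) / 2 = m := by omega
    have h3 : (m + m) / 2 = m := by omega
    rw [h1, h2, h3, Nat.mul_div_cancel_left _ (by norm_num : 0 < 4)]
    ring
  · have h1 : (2 * m + 1) ^ 2 = 4 * (m ^ 2 + m) + 1 := by ring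
    have h2 : (2 * m + 1 + 1) / 2 = m + 1 := by omega
    have h3 : (2 * m + 1) / 2 = m := by omega
    rw [h1, h2, h3, Nat.mul_add_div (by norm_num : 0 < 4)]
    norm_num
    ring

lemma ncard_Y (hn : 2 ≤ n) (I J : Set (Fin n))
    (hdisj : I ∩ J = ∅) (hI : I.ncard = (n + 1) / 2) (hJ : J.ncard = n / 2) :
    ({f | ∃ i : Fin n, f = nSuppMap n i i 1} ∪
      {f | ∃ i ∈ I, ∃ j ∈ J, ∃ σ : Equiv.Perm (Fin n), f = nSuppMap n i j σ} ∪
      {constMap n (some (0, 0)), sglMap n 0 0 0 0} : Set (MapBn n)).ncard =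
      n.factorial * (n ^ 2 / 4) + n + 2 := by
  have hdisj' : ∀ x : Fin n, x ∈ I → x ∈ J → False := by
    intro x h1 h2
    have : x ∈ I ∩ J := ⟨h1, h2⟩
    rw [hdisj] at this
    exact this
  set A : Set (MapBn n) := {f | ∃ i : Fin n, f = nSuppMap n i i 1} with hA
  set B : Set (MapBn n) :=
    {f | ∃ i ∈ I, ∃ j ∈ J, ∃ σ : Equiv.Perm (Fin n), f = nSuppMap n i j σ} with hB
  set C : Set (MapBn n) := {constMap n (some (0, 0)), sglMap n 0 0 0 0} with hC
  have hAeq : A = (fun i : Fin n => nSuppMap n i i 1) '' Set.univ := by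
    rw [Set.image_univ]
    ext f
    simp only [hA, Set.mem_setOf_eq, Set.mem_range]
    exact ⟨fun ⟨i, h⟩ => ⟨i, h.symm⟩, fun ⟨i, h⟩ => ⟨i, h.symm⟩⟩
  have hBeq : B = (fun t : (Fin n × Fin n) × Equiv.Perm (Fin n) =>
      nSuppMap n t.1.1 t.1.2 t.2) '' ((I ×ˢ J) ×ˢ Set.univ) := by
    ext f
    simp only [hB, Set.mem_setOf_eq, Set.mem_image, Set.mem_prod, Set.mem_univ, and_true]
    constructor
    · rintro ⟨i, hi, j, hj, σ, rfl⟩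
      exact ⟨⟨⟨i, j⟩, σ⟩, ⟨hi, hj⟩, rfl⟩
    · rintro ⟨⟨⟨i, j⟩, σ⟩, ⟨hi, hj⟩, rfl⟩
      exact ⟨i, hi, j, hj, σ, rfl⟩
  have hinjA : Function.Injective (fun i : Fin n => nSuppMap n i i 1) := by
    intro a b h
    exact (nSupp_inj h).1
  have hinjB : Function.Injective (fun t : (Fin n × Fin n) × Equiv.Perm (Fin n) =>
      nSuppMap n t.1.1 t.1.2 t.2) := by
    rintro ⟨⟨a, b⟩, σ⟩ ⟨⟨a', b'⟩, σ'⟩ h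
    obtain ⟨h1, h2, h3⟩ := nSupp_inj h
    simp_all
  have hAfin : A.Finite := hAeq ▸ (Set.toFinite _).image _
  have hBfin : B.Finite := hBeq ▸ (Set.toFinite _).image _
  have hCfin : C.Finite := Set.toFinite _
  have hcardA : A.ncard = n := by
    rw [hAeq, Set.ncard_image_of_injective _ hinjA, Set.ncard_univ, Nat.card_eq_fintype_card,
      Fintype.card_fin]
  have hcardB : B.ncard = n.factorial * (n ^ 2 / 4) := by
    rw [hBeq, Set.ncard_image_of_injective _ hinjB, ncard_prod', ncard_prod', hI, hJ,
      Set.ncard_univ, Nat.card_eq_fintype_card, Fintype.card_perm, Fintype.card_fin,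
      half_mul_half]
    ring
  have hcardC : C.ncard = 2 := Set.ncard_pair (const_ne_sgl 0 0 0 0 0 0)
  have hABdisj : Disjoint A B := by
    rw [Set.disjoint_left]
    rintro f ⟨i, rfl⟩ ⟨i', hi', j', hj', σ', hf⟩
    obtain ⟨rfl, h2, _⟩ := nSupp_inj hf
    exact hdisj' i hi' (h2 ▸ hj')
  have hABCdisj : Disjoint (A ∪ B) C := by
    rw [Set.disjoint_left]
    rintro f hf (rfl | rfl)
    · rcases hf with ⟨i, hf⟩ | ⟨i, _, j, _, σ, hf⟩ <;>
        exact nSupp_ne_const _ _ _ _ hf.symm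
    · rcases hf with ⟨i, hf⟩ | ⟨i, _, j, _, σ, hf⟩ <;>
        exact nSupp_ne_sgl hn _ _ _ _ _ _ _ hf.symm
  rw [Set.ncard_union_eq hABCdisj (hAfin.union hBfin) hCfin,
    Set.ncard_union_eq hABdisj hAfin hBfin, hcardA, hcardB, hcardC]
  ring

instance : Finite (Bn n) := inferInstanceAs (Finite (Option (Fin n × Fin n)))

lemma APlus_finite : (APlus n).Finite := by
  have hsub : APlus n ⊆ Set.range (constMap n) ∪
      Set.range (fun t : (Fin n × Fin n) × Equiv.Perm (Fin n) => nSuppMap n t.1.1 t.1.2 t.2) ∪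
      Set.range (fun t : (Fin n × Fin n) × Fin n × Fin n =>
        sglMap n t.1.1 t.1.2 t.2.1 t.2.2) := by
    rintro f (⟨c, rfl⟩ | ⟨p, q, σ, rfl⟩ | ⟨k, l, p, q, rfl⟩)
    · exact Or.inl (Or.inl ⟨c, rfl⟩)
    · exact Or.inl (Or.inr ⟨⟨⟨p, q⟩, σ⟩, rfl⟩)
    · exact Or.inr ⟨⟨⟨k, l⟩, ⟨p, q⟩⟩, rfl⟩
  exact Set.Finite.subset ((Set.finite_range _).union (Set.finite_range _) |>.union
    (Set.finite_range _)) hsub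

end Card

theorem upper_rank_lb (n : ℕ) [NeZero n] (hn : 2 ≤ n) (I J : Set (Fin n))
    (hIJ : I ∪ J = Set.univ) (hdisj : I ∩ J = ∅)
    (hI : I.ncard = (n + 1) / 2) (hJ : J.ncard = n / 2) :
    let Y : Set (MapBn n) :=
      {f | ∃ i : Fin n, f = nSuppMap n i i 1} ∪
      {f | ∃ i ∈ I, ∃ j ∈ J, ∃ σ : Equiv.Perm (Fin n), f = nSuppMap n i j σ} ∪
      {constMap n (some (0, 0)), sglMap n 0 0 0 0}
    IndependentIn Y ∧ Y.ncard = n.factorial * (n ^ 2 / 4) + n + 2 ∧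
    n.factorial * (n ^ 2 / 4) + n + 2 ≤
      sSup {k | ∃ U : Set (MapBn n), U ⊆ APlus n ∧ U.ncard = k ∧ IndependentIn U} := by
  intro Y
  have hind : IndependentIn Y := independent_Y hn I J hIJ hdisj
  have hcard : Y.ncard = n.factorial * (n ^ 2 / 4) + n + 2 := ncard_Y hn I J hdisj hI hJ
  refine ⟨hind, hcard, ?_⟩
  have hYsub : Y ⊆ APlus n := by
    rintro f ((⟨i, rfl⟩ | ⟨i, _, j, _, σ, rfl⟩) | (rfl | rfl))
    · exact Or.inr (Or.inl ⟨_, _, _, rfl⟩)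
    · exact Or.inr (Or.inl ⟨_, _, _, rfl⟩)
    · exact Or.inl ⟨_, rfl⟩
    · exact Or.inr (Or.inr ⟨_, _, _, _, rfl⟩)
  have hbdd : BddAbove {k | ∃ U : Set (MapBn n), U ⊆ APlus n ∧ U.ncard = k ∧ IndependentIn U} := by
    refine ⟨(APlus n).ncard, ?_⟩
    rintro k ⟨U, hU, rfl, -⟩
    exact Set.ncard_le_ncard hU APlus_finite
  exact le_csSup hbdd ⟨Y, hYsub, hcard, hind⟩
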